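/- The function f : ℓ² → ℝ, f((xₙ)_{n≥1}) = Σ_{n≥1} n xₙ^{2n}, is well defined, convex, nonnegative, with {x : f(x) ≤ 0} = {0}, and is Gâteaux differentiable with ∇f(x) = (2n² xₙ^{2n−1})_{n≥1}. -/

import Mathlib

open Filter Topology RealInnerProductSpace

lemma aux_sq (x : lp (fun _ : ℕ => ℝ) 2) : Summable (fun n => (x n)^2) := by
  have := lp.memℓp x
  rw [memℓp_gen_iff (by norm_num)] at this
  simpa using this

lemma aux_small (x : lp (fun _ : ℕ => ℝ) 2) : ∀ᶠ n in atTop, |x n| ≤ 1/4 := by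
  have h := (aux_sq x).tendsto_atTop_zero
  have h2 : ∀ᶠ n in atTop, (x n)^2 < 1/16 := h.eventually (eventually_lt_nhds (by norm_num))
  filter_upwards [h2] with n hn
  nlinarith [abs_nonneg (x n), sq_abs (x n)]

lemma npow1 (n : ℕ) : ((n:ℝ)+1) ≤ 2^n := by
  exact_mod_cast (Nat.lt_two_pow_self (n := n))

lemma sq_small {a : ℝ} (h : |a| ≤ 1/4) : a^2 ≤ 1/16 := by
  calc a^2 = |a|^2 := (sq_abs a).symm
    _ ≤ (1/4)^2 := pow_le_pow_left₀ (abs_nonneg a) h 2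
    _ = 1/16 := by norm_num

lemma aux_term_nonneg (c y : ℝ) (hc : 0 ≤ c) (n : ℕ) : 0 ≤ c * y^(2*(n+1)) := by
  rw [pow_mul]; positivity

lemma aux_summableA (x : lp (fun _ : ℕ => ℝ) 2) :
    Summable (fun n : ℕ => ((n:ℝ)+1) * (x n)^(2*(n+1))) := by
  apply Summable.of_norm_bounded_eventually (g := fun n => (x n)^2) (aux_sq x)
  rw [Nat.cofinite_eq_atTop]
  filter_upwards [aux_small x] with n hn
  have hq : (x n)^2 ≤ 1/16 := sq_small hn
  have hq0 : (0:ℝ) ≤ (x n)^2 := sq_nonneg _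
  rw [Real.norm_eq_abs, abs_mul, abs_pow,
    abs_of_nonneg (by positivity : (0:ℝ) ≤ (n:ℝ)+1), pow_mul, sq_abs, pow_succ]
  have h2 : ((x n)^2)^n ≤ (1/16)^n := pow_le_pow_left₀ hq0 hq n
  have h3 : ((n:ℝ)+1) * (1/16)^n ≤ 1 := by
    calc ((n:ℝ)+1) * (1/16)^n ≤ 2^n * (1/16)^n := by
          apply mul_le_mul_of_nonneg_right (npow1 n) (by positivity)
      _ = (1/8)^n := by rw [← mul_pow]; norm_num
      _ ≤ 1 := pow_le_one₀ (by norm_num) (by norm_num)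
  calc ((n:ℝ)+1) * (((x n)^2)^n * (x n)^2) = (((n:ℝ)+1) * ((x n)^2)^n) * (x n)^2 := by ring
    _ ≤ 1 * (x n)^2 := by
        apply mul_le_mul_of_nonneg_right _ hq0
        calc ((n:ℝ)+1) * ((x n)^2)^n ≤ ((n:ℝ)+1) * (1/16)^n :=
              mul_le_mul_of_nonneg_left h2 (by positivity)
          _ ≤ 1 := h3
    _ = (x n)^2 := one_mul _

lemma aux_gmem (x : lp (fun _ : ℕ => ℝ) 2) :
    Memℓp (fun n : ℕ => 2*((n:ℝ)+1)^2 * (x n)^(2*(n+1)-1)) 2 := by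
  rw [memℓp_gen_iff (by norm_num)]
  have key : Summable (fun n : ℕ => (2*((n:ℝ)+1)^2 * (x n)^(2*(n+1)-1))^(2:ℕ)) := by
    apply Summable.of_norm_bounded_eventually (g := fun n => 4 * (x n)^2) ((aux_sq x).mul_left 4)
    rw [Nat.cofinite_eq_atTop]
    filter_upwards [aux_small x] with n hn
    have hq : (x n)^2 ≤ 1/16 := sq_small hn
    have hq0 : (0:ℝ) ≤ (x n)^2 := sq_nonneg _
    have he : 2*(n+1)-1 = 2*n+1 := by omega
    rw [he, Real.norm_eq_abs]
    have h0 : (2*((n:ℝ)+1)^2 * (x n)^(2*n+1))^(2:ℕ)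
        = 4*((n:ℝ)+1)^4 * ((((x n)^2)^n)^2 * (x n)^2) := by ring
    rw [h0, abs_of_nonneg (by positivity)]
    have h2 : (((x n)^2)^n)^2 ≤ ((1/16)^n)^2 :=
      pow_le_pow_left₀ (by positivity) (pow_le_pow_left₀ hq0 hq n) 2
    have hA : ((n:ℝ)+1)^4 ≤ 16^n := by
      calc ((n:ℝ)+1)^4 ≤ (2^n)^4 := pow_le_pow_left₀ (by positivity) (npow1 n) 4
        _ = 16^n := by rw [← pow_mul, Nat.mul_comm, pow_mul]; norm_num
    have h3 : ((n:ℝ)+1)^4 * ((1/16)^n)^2 ≤ 1 := by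
      calc ((n:ℝ)+1)^4 * ((1/16)^n)^2 ≤ 16^n * ((1/16)^n)^2 :=
            mul_le_mul_of_nonneg_right hA (by positivity)
        _ = (16 * (1/16))^n * (1/16)^n := by rw [mul_pow]; ring
        _ ≤ 1 := by
            rw [show (16:ℝ) * (1/16) = 1 by norm_num, one_pow, one_mul]
            exact pow_le_one₀ (by norm_num) (by norm_num)
    calc 4*((n:ℝ)+1)^4 * ((((x n)^2)^n)^2 * (x n)^2)
        = 4 * (((n:ℝ)+1)^4 * (((x n)^2)^n)^2) * (x n)^2 := by ring
      _ ≤ 4 * 1 * (x n)^2 := by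
          apply mul_le_mul_of_nonneg_right _ hq0
          apply mul_le_mul_of_nonneg_left _ (by norm_num)
          calc ((n:ℝ)+1)^4 * (((x n)^2)^n)^2 ≤ ((n:ℝ)+1)^4 * ((1/16)^n)^2 :=
                mul_le_mul_of_nonneg_left h2 (by positivity)
            _ ≤ 1 := h3
      _ = 4 * (x n)^2 := by ring
  have hconv : ∀ n : ℕ, ‖2*((n:ℝ)+1)^2 * (x n)^(2*(n+1)-1)‖ ^ ((2:ENNReal).toReal)
      = (2*((n:ℝ)+1)^2 * (x n)^(2*(n+1)-1))^(2:ℕ) := by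
    intro n
    rw [Real.norm_eq_abs, show ((2:ENNReal).toReal) = ((2:ℕ):ℝ) by norm_num,
      Real.rpow_natCast, sq_abs]
  exact key.congr fun n => (hconv n).symm

lemma choose_le_two_pow' (n k : ℕ) : n.choose k ≤ 2 ^ n := by
  rcases le_or_gt k n with h | h
  · calc n.choose k ≤ ∑ i ∈ Finset.range (n+1), n.choose i :=
        Finset.single_le_sum (fun i _ => Nat.zero_le _) (Finset.mem_range.2 (by omega))
    _ = 2 ^ n := Nat.sum_range_choose n
  · rw [Nat.choose_eq_zero_of_lt h]; positivity

lemma keybound (j : ℕ) (a h : ℝ) :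
    |(a+h)^(j+2) - a^(j+2) - (j+2)*a^(j+1)*h| ≤
      h^2 * ((j+1) * 2^(j+2) * (max |a| |h|)^j) := by
  set s := max |a| |h| with hs
  have hsa : |a| ≤ s := le_max_left _ _
  have hsh : |h| ≤ s := le_max_right _ _
  have hs0 : 0 ≤ s := le_trans (abs_nonneg a) hsa
  have hexp : (a+h)^(j+2) - a^(j+2) - (j+2)*a^(j+1)*h
      = ∑ k ∈ Finset.range (j+1), a^k * h^(j+2-k) * ((j+2).choose k) := by
    rw [add_pow]
    rw [show j + 2 + 1 = (j+1) + 1 + 1 by ring, Finset.sum_range_succ, Finset.sum_range_succ]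
    simp [Nat.choose_self, Nat.choose_succ_self_right]
    ring
  rw [hexp]
  calc |∑ k ∈ Finset.range (j+1), a^k * h^(j+2-k) * ((j+2).choose k)|
      ≤ ∑ k ∈ Finset.range (j+1), |a^k * h^(j+2-k) * ((j+2).choose k)| :=
        Finset.abs_sum_le_sum_abs _ _
    _ ≤ ∑ k ∈ Finset.range (j+1), h^2 * (2^(j+2) * s^j) := by
        apply Finset.sum_le_sum
        intro k hk
        have hk' : k ≤ j := by simpa using Nat.lt_succ_iff.mp (Finset.mem_range.mp hk)
        rw [abs_mul, abs_mul, abs_pow, abs_pow]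
        have h1 : |h|^(j+2-k) = h^2 * |h|^(j-k) := by
          rw [show j+2-k = 2 + (j-k) by omega, pow_add, sq_abs]
        rw [h1]
        have h2 : |a|^k * |h|^(j-k) ≤ s^j := by
          calc |a|^k * |h|^(j-k) ≤ s^k * s^(j-k) := by
                apply mul_le_mul (pow_le_pow_left₀ (abs_nonneg a) hsa k)
                  (pow_le_pow_left₀ (abs_nonneg h) hsh _) (by positivity) (by positivity)
            _ = s^j := by rw [← pow_add]; congr 1; omega
        have h3 : |((j+2).choose k : ℝ)| ≤ 2^(j+2) := by
          rw [Nat.abs_cast]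
          exact_mod_cast choose_le_two_pow' (j+2) k
        calc |a|^k * (h^2 * |h|^(j-k)) * |((j+2).choose k : ℝ)|
            = h^2 * ((|a|^k * |h|^(j-k)) * |((j+2).choose k : ℝ)|) := by ring
          _ ≤ h^2 * (s^j * 2^(j+2)) := by
              apply mul_le_mul_of_nonneg_left _ (sq_nonneg h)
              exact mul_le_mul h2 h3 (abs_nonneg _) (by positivity)
          _ = h^2 * (2^(j+2) * s^j) := by ring
    _ = h^2 * ((j+1) * 2^(j+2) * s^j) := by
        rw [Finset.sum_const, Finset.card_range]
        ring

noncomputable def W (x v : lp (fun _ : ℕ => ℝ) 2) : ℕ → ℝ :=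
  fun n => ((n:ℝ)+1) * ((2*(n:ℝ)+1) * 2^(2*n+2) * (max |x n| |v n|)^(2*n)) * (v n)^2

lemma W_nonneg (x v : lp (fun _ : ℕ => ℝ) 2) (n : ℕ) : 0 ≤ W x v n := by
  unfold W
  have h0 : (0:ℝ) ≤ max |x n| |v n| := le_trans (abs_nonneg _) (le_max_left _ _)
  positivity

lemma aux_W (x v : lp (fun _ : ℕ => ℝ) 2) : Summable (W x v) := by
  apply Summable.of_norm_bounded_eventually (g := fun n => 8 * (v n)^2) ((aux_sq v).mul_left 8)
  rw [Nat.cofinite_eq_atTop]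
  filter_upwards [aux_small x, aux_small v] with n hx hv
  rw [Real.norm_eq_abs, abs_of_nonneg (W_nonneg x v n)]
  unfold W
  have h0 : (0:ℝ) ≤ max |x n| |v n| := le_trans (abs_nonneg _) (le_max_left _ _)
  have hs : max |x n| |v n| ≤ 1/4 := max_le hx hv
  have h1 : (max |x n| |v n|)^(2*n) ≤ (1/16)^n := by
    calc (max |x n| |v n|)^(2*n) ≤ (1/4)^(2*n) := pow_le_pow_left₀ h0 hs _
      _ = (1/16)^n := by rw [pow_mul]; norm_num
  have h2 : (2*(n:ℝ)+1) ≤ 2*2^n := by nlinarith [npow1 n]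
  have h3 : (2:ℝ)^(2*n+2) = 4*4^n := by rw [pow_add, pow_mul]; norm_num [mul_comm]
  calc ((n:ℝ)+1) * ((2*(n:ℝ)+1) * 2^(2*n+2) * (max |x n| |v n|)^(2*n)) * (v n)^2
      ≤ 2^n * ((2*2^n) * (4*4^n) * (1/16)^n) * (v n)^2 := by
        apply mul_le_mul_of_nonneg_right _ (sq_nonneg _)
        apply mul_le_mul (npow1 n) _ (by positivity) (by positivity)
        rw [h3]
        apply mul_le_mul _ h1 (by positivity) (by positivity)
        exact mul_le_mul_of_nonneg_right h2 (by positivity)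
    _ = 8 * ((2:ℝ)^n * 2^n * 4^n * (1/16)^n) * (v n)^2 := by ring
    _ = 8 * (v n)^2 := by
        rw [← mul_pow, ← mul_pow, ← mul_pow]
        norm_num

lemma aux_est (x v : lp (fun _ : ℕ => ℝ) 2)
    (hsumL : Summable (fun n : ℕ => (2*((n:ℝ)+1)^2 * (x n)^(2*(n+1)-1)) * v n))
    (t : ℝ) (ht : t ≠ 0) (ht1 : |t| ≤ 1) :
    |((∑' n : ℕ, ((n:ℝ)+1)*((x + t•v) n)^(2*(n+1))) - ∑' n : ℕ, ((n:ℝ)+1)*(x n)^(2*(n+1)))/t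
      - ∑' n : ℕ, (2*((n:ℝ)+1)^2 * (x n)^(2*(n+1)-1)) * v n|
    ≤ |t| * ∑' n, W x v n := by
  have ht' : |t| ≠ 0 := abs_ne_zero.mpr ht
  have hco : ∀ n : ℕ, ((x + t•v) n : ℝ) = x n + t * v n := by intro n; rfl
  have hsum1 : Summable (fun n : ℕ => ((n:ℝ)+1)*(x n + t*v n)^(2*(n+1))) := by
    refine (aux_summableA (x + t•v)).congr fun n => ?_
    rw [hco n]
  have hsum2 := aux_summableA x
  set T : ℕ → ℝ := fun n =>
    (((n:ℝ)+1)*(x n + t*v n)^(2*(n+1)) - ((n:ℝ)+1)*(x n)^(2*(n+1)))/t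
      - (2*((n:ℝ)+1)^2 * (x n)^(2*(n+1)-1)) * v n with hT
  have hterm : ∀ n : ℕ, T n
      = (((n:ℝ)+1)/t) * ((x n + t*v n)^(2*n+2) - (x n)^(2*n+2)
          - ((↑(2*n):ℝ)+2)*(x n)^(2*n+1)*(t*v n)) := by
    intro n
    have e1 : 2*(n+1) = 2*n+2 := by ring
    have e2 : 2*(n+1)-1 = 2*n+1 := by omega
    rw [hT]
    simp only [e1, e2]
    push_cast
    field_simp
  have hbd : ∀ n : ℕ, |T n| ≤ |t| * W x v n := by
    intro n
    rw [hterm n, abs_mul, abs_div, abs_of_nonneg (by positivity : (0:ℝ) ≤ (n:ℝ)+1)]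
    have hk := keybound (2*n) (x n) (t * v n)
    have hmax : max |x n| |t * v n| ≤ max |x n| |v n| := by
      apply max_le_max le_rfl
      rw [abs_mul]
      nlinarith [abs_nonneg (v n)]
    have h0 : (0:ℝ) ≤ max |x n| |t * v n| := le_trans (abs_nonneg _) (le_max_left _ _)
    have hk2 : |(x n + t*v n)^(2*n+2) - (x n)^(2*n+2) - ((↑(2*n):ℝ)+2)*(x n)^(2*n+1)*(t*v n)|
        ≤ (t*v n)^2 * (((↑(2*n):ℝ)+1) * 2^(2*n+2) * (max |x n| |v n|)^(2*n)) := by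
      refine hk.trans ?_
      apply mul_le_mul_of_nonneg_left _ (sq_nonneg _)
      apply mul_le_mul_of_nonneg_left (pow_le_pow_left₀ h0 hmax _) (by positivity)
    calc ((n:ℝ)+1)/|t| * |(x n + t*v n)^(2*n+2) - (x n)^(2*n+2)
          - ((↑(2*n):ℝ)+2)*(x n)^(2*n+1)*(t*v n)|
        ≤ ((n:ℝ)+1)/|t| * ((t*v n)^2 * (((↑(2*n):ℝ)+1) * 2^(2*n+2) * (max |x n| |v n|)^(2*n))) :=
          mul_le_mul_of_nonneg_left hk2 (by positivity)
      _ = |t| * W x v n := by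
          have h5 : (t * v n)^2 = |t|^2 * (v n)^2 := by rw [mul_pow, sq_abs]
          rw [div_mul_eq_mul_div, div_eq_iff ht', h5]
          unfold W
          push_cast
          ring
  have key1 : ((∑' n : ℕ, ((n:ℝ)+1)*((x + t•v) n)^(2*(n+1)))
      - ∑' n : ℕ, ((n:ℝ)+1)*(x n)^(2*(n+1)))/t
      - (∑' n : ℕ, (2*((n:ℝ)+1)^2 * (x n)^(2*(n+1)-1)) * v n) = ∑' n, T n := by
    rw [tsum_congr (fun n => by rw [hco n] :
      ∀ n : ℕ, ((n:ℝ)+1)*((x + t•v) n)^(2*(n+1)) = ((n:ℝ)+1)*(x n + t*v n)^(2*(n+1)))]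
    rw [← Summable.tsum_sub hsum1 hsum2, ← tsum_div_const, ← Summable.tsum_sub ((hsum1.sub hsum2).div_const t) hsumL]
  rw [key1]
  have habs : Summable (fun n => |T n|) :=
    Summable.of_nonneg_of_le (fun n => abs_nonneg _) hbd ((aux_W x v).mul_left |t|)
  calc |∑' n, T n| ≤ ∑' n, |T n| := by
        rw [← Real.norm_eq_abs]
        exact (norm_tsum_le_tsum_norm (by simpa [Real.norm_eq_abs] using habs)).trans
          (le_of_eq (tsum_congr fun n => by rw [Real.norm_eq_abs]))
    _ ≤ ∑' n, |t| * W x v n := Summable.tsum_le_tsum hbd habs ((aux_W x v).mul_left |t|)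
    _ = |t| * ∑' n, W x v n := tsum_mul_left

theorem stmt_18 (f : lp (fun _ : ℕ => ℝ) 2 → ℝ)
    (hf : ∀ x : lp (fun _ : ℕ => ℝ) 2,
      f x = ∑' n : ℕ, ((n : ℝ) + 1) * (x n) ^ (2 * (n + 1))) :
    (∀ x : lp (fun _ : ℕ => ℝ) 2,
      Summable (fun n : ℕ => ((n : ℝ) + 1) * (x n) ^ (2 * (n + 1)))) ∧
    ConvexOn ℝ Set.univ f ∧
    (∀ x, 0 ≤ f x) ∧
    {x : lp (fun _ : ℕ => ℝ) 2 | f x ≤ 0} = {0} ∧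
    (∀ x : lp (fun _ : ℕ => ℝ) 2, ∃ g : lp (fun _ : ℕ => ℝ) 2,
      (∀ n : ℕ, g n = 2 * ((n : ℝ) + 1) ^ 2 * (x n) ^ (2 * (n + 1) - 1)) ∧
      ∀ v : lp (fun _ : ℕ => ℝ) 2,
        Tendsto (fun t : ℝ => (f (x + t • v) - f x) / t) (𝓝[≠] 0)
          (𝓝 ⟪g, v⟫)) := by
  have hnn : ∀ (x : lp (fun _ : ℕ => ℝ) 2) (n : ℕ), 0 ≤ ((n:ℝ)+1) * (x n)^(2*(n+1)) :=
    fun x n => aux_term_nonneg _ _ (by positivity) n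
  refine ⟨fun x => aux_summableA x, ⟨convex_univ, ?_⟩, ?_, ?_, ?_⟩
  · intro x _ y _ a b ha hb hab
    rw [hf, hf, hf]
    have key : ∀ n : ℕ, ((n:ℝ)+1)*((a•x+b•y) n)^(2*(n+1))
        ≤ a*(((n:ℝ)+1)*(x n)^(2*(n+1))) + b*(((n:ℝ)+1)*(y n)^(2*(n+1))) := by
      intro n
      have hev : Even (2*(n+1)) := ⟨n+1, by ring⟩
      have hcx := (hev.convexOn_pow (𝕜 := ℝ)).2 (Set.mem_univ (x n)) (Set.mem_univ (y n)) ha hb hab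
      simp only at hcx
      have hco : (a•x+b•y) n = a * x n + b * y n := rfl
      rw [hco]
      calc ((n:ℝ)+1)*(a * x n + b * y n)^(2*(n+1))
          ≤ ((n:ℝ)+1)*(a * (x n)^(2*(n+1)) + b * (y n)^(2*(n+1))) := by
            apply mul_le_mul_of_nonneg_left _ (by positivity)
            simpa [smul_eq_mul] using hcx
        _ = a*(((n:ℝ)+1)*(x n)^(2*(n+1))) + b*(((n:ℝ)+1)*(y n)^(2*(n+1))) := by ring
    calc (∑' n : ℕ, ((n:ℝ)+1)*((a•x+b•y) n)^(2*(n+1)))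
        ≤ ∑' n : ℕ, (a*(((n:ℝ)+1)*(x n)^(2*(n+1))) + b*(((n:ℝ)+1)*(y n)^(2*(n+1)))) :=
          Summable.tsum_le_tsum key (aux_summableA _)
            (((aux_summableA x).mul_left a).add ((aux_summableA y).mul_left b))
      _ = a • (∑' n : ℕ, ((n:ℝ)+1)*(x n)^(2*(n+1))) + b • (∑' n : ℕ, ((n:ℝ)+1)*(y n)^(2*(n+1))) := by
          rw [Summable.tsum_add ((aux_summableA x).mul_left a) ((aux_summableA y).mul_left b),
            tsum_mul_left, tsum_mul_left]; rfl
  · intro x; rw [hf]; exact tsum_nonneg (hnn x)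
  · ext x
    simp only [Set.mem_setOf_eq, Set.mem_singleton_iff]
    constructor
    · intro hx
      apply lp.ext
      funext n
      have h1 : ((n:ℝ)+1) * (x n)^(2*(n+1)) ≤ f x := by
        rw [hf]; exact Summable.le_tsum (aux_summableA x) n (fun j _ => hnn x j)
      have h2 : ((n:ℝ)+1) * (x n)^(2*(n+1)) = 0 := le_antisymm (h1.trans hx) (hnn x n)
      have h3 : (x n)^(2*(n+1)) = 0 := by
        have hne : ((n:ℝ)+1) ≠ 0 := by positivity
        rcases mul_eq_zero.mp h2 with h | h
        · exact absurd h hne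
        · exact h
      have := pow_eq_zero_iff (n := 2*(n+1)) (by omega) |>.mp h3
      simpa using this
    · intro h
      subst h
      rw [hf]
      have : ∀ n : ℕ, ((n:ℝ)+1) * ((0 : lp (fun _ : ℕ => ℝ) 2) n)^(2*(n+1)) = 0 := by
        intro n
        simp [zero_pow (by omega : 2*(n+1) ≠ 0)]
      rw [tsum_congr this, tsum_zero]
  · intro x
    refine ⟨⟨_, aux_gmem x⟩, fun n => rfl, ?_⟩
    intro v
    set g : lp (fun _ : ℕ => ℝ) 2 := ⟨_, aux_gmem x⟩ with hg
    have hL : ⟪g, v⟫ = ∑' n : ℕ, (2*((n:ℝ)+1)^2 * (x n)^(2*(n+1)-1)) * v n := by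
      rw [lp.inner_eq_tsum]
      exact tsum_congr fun n => by simp [RCLike.inner_apply, mul_comm, hg]
    have hsumL : Summable (fun n : ℕ => (2*((n:ℝ)+1)^2 * (x n)^(2*(n+1)-1)) * v n) := by
      have := lp.summable_inner (𝕜 := ℝ) g v
      refine this.congr fun n => ?_
      simp [RCLike.inner_apply, mul_comm, hg]
    rw [← tendsto_sub_nhds_zero_iff]
    have hev : ∀ᶠ t : ℝ in 𝓝[≠] 0,
        ‖(f (x + t • v) - f x) / t - ⟪g, v⟫‖ ≤ |t| * ∑' n, W x v n := by
      have hb : ∀ᶠ t : ℝ in 𝓝 0, |t| ≤ 1 := by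
        filter_upwards [Metric.ball_mem_nhds (0:ℝ) one_pos] with t ht
        rw [Metric.mem_ball, Real.dist_eq, sub_zero] at ht
        exact ht.le
      filter_upwards [hb.filter_mono nhdsWithin_le_nhds, self_mem_nhdsWithin] with t ht1 htne
      rw [Real.norm_eq_abs, hf, hf, hL]
      exact aux_est x v hsumL t htne ht1
    apply squeeze_zero_norm' hev
    have : Tendsto (fun t : ℝ => |t| * ∑' n, W x v n) (𝓝 0) (𝓝 0) := by
      have h1 : Tendsto (fun t : ℝ => |t|) (𝓝 0) (𝓝 0) := by
        simpa using (continuous_abs.tendsto (0:ℝ))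
      simpa using h1.mul_const (∑' n, W x v n)
    exact this.mono_left nhdsWithin_le_nhds
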